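/- arXiv:1510.00911 — 11 statements merged into one kernel-verified Lean document; each statement's English description precedes it below -/
import Mathlib

section
/- Every subautomaton of a retractable automaton is retractable. -/
universe u v

/-- The transition function extended to words (`X*`). -/
def deltaStar {A X : Type*} (δ : A → X → A) : A → List X → A
  | a, [] => a
  | a, x :: p => deltaStar δ (δ a x) p

/-- `B` is a subautomaton of the automaton with transition `δ`. -/
def IsSubaut {A X : Type*} (δ : A → X → A) (B : Set A) : Prop :=
  B.Nonempty ∧ ∀ b ∈ B, ∀ x : X, δ b x ∈ B

/-- `φ` is a retract homomorphism of the automaton onto the subautomaton `B`: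
a homomorphism of `A` onto `B` leaving the elements of `B` fixed. -/
def IsRetractHom {A X : Type*} (δ : A → X → A) (B : Set A) (φ : A → A) : Prop :=
  (∀ a, φ a ∈ B) ∧ (∀ b ∈ B, φ b = b) ∧ ∀ a x, φ (δ a x) = δ (φ a) x

/-- `B` is a retract subautomaton. -/
def IsRetract {A X : Type*} (δ : A → X → A) (B : Set A) : Prop :=
  ∃ φ, IsRetractHom δ B φ

/-- An automaton is retractable if every subautomaton is retract. -/
def Retractable {A X : Type*} (δ : A → X → A) : Prop :=
  ∀ B, IsSubaut δ B → IsRetract δ B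

/-- Retractability of the subautomaton on the carrier `D` (homomorphisms are
represented by functions on the ambient state set, restricted to `D`). -/
def RetractableOn {A X : Type*} (δ : A → X → A) (D : Set A) : Prop :=
  ∀ C ⊆ D, IsSubaut δ C →
    ∃ φ : A → A, (∀ a ∈ D, φ a ∈ C) ∧ (∀ c ∈ C, φ c = c) ∧
      ∀ a ∈ D, ∀ x, φ (δ a x) = δ (φ a) x

/-- The principal subautomaton `R(a) = δ(a, X*)` generated by `a`. -/
def Rset {A X : Type*} (δ : A → X → A) (a : A) : Set A :=
  {b | ∃ p : List X, deltaStar δ a p = b}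

/-- The `R`-class `R_a = {b : R(b) = R(a)}`. -/
def Rclass {A X : Type*} (δ : A → X → A) (a : A) : Set A :=
  {b | Rset δ b = Rset δ a}

/-- `R[a] = R(a) − R_a`. -/
def Rideal {A X : Type*} (δ : A → X → A) (a : A) : Set A :=
  Rset δ a \ Rclass δ a

/-- The Rees congruence induced by `B`: two states are related iff they are
equal or both lie in `B`. -/
def reesRel {A : Type*} (B : Set A) (u v : A) : Prop :=
  u = v ∨ (u ∈ B ∧ v ∈ B)

/-- A minimal subautomaton: a subautomaton with no proper subautomaton. -/
def IsMinimalSubaut {A X : Type*} (δ : A → X → A) (B : Set A) : Prop :=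
  IsSubaut δ B ∧ ∀ C ⊆ B, IsSubaut δ C → C = B

/-- The automaton has a kernel: a subautomaton contained in every subautomaton. -/
def HasKernel {A X : Type*} (δ : A → X → A) : Prop :=
  ∃ K, IsSubaut δ K ∧ ∀ B, IsSubaut δ B → K ⊆ B

/-- The principal factor `R{a}` (the Rees factor of `R(a)` modulo `R[a]`,
described via the Rees congruence) is strongly connected. -/
def FactorSC {A X : Type*} (δ : A → X → A) (a : A) : Prop :=
  ∀ b ∈ Rset δ a, ∀ c ∈ Rset δ a,
    ∃ p : List X, p ≠ [] ∧ reesRel (Rideal δ a) (deltaStar δ b p) c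

/-- The principal factor `R{a}` is a strongly trap-connected non-trivial
one-trap automaton (with trap the class of `t`). -/
def FactorSTC {A X : Type*} (δ : A → X → A) (a : A) : Prop :=
  ∃ t ∈ Rset δ a,
    (∀ x, reesRel (Rideal δ a) (δ t x) t) ∧
    (∃ b ∈ Rset δ a, ¬ reesRel (Rideal δ a) b t) ∧
    (∀ b ∈ Rset δ a, (∀ x, reesRel (Rideal δ a) (δ b x) b) → reesRel (Rideal δ a) b t) ∧
    (∀ b ∈ Rset δ a, ∀ c ∈ Rset δ a, ¬ reesRel (Rideal δ a) b t →
      ∃ p : List X, p ≠ [] ∧ reesRel (Rideal δ a) (deltaStar δ b p) c)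

/-- The principal factor `R{a}` is a strongly trapped non-trivial one-trap
automaton (with trap the class of `t`). -/
def FactorST {A X : Type*} (δ : A → X → A) (a : A) : Prop :=
  ∃ t ∈ Rset δ a,
    (∃ b ∈ Rset δ a, ¬ reesRel (Rideal δ a) b t) ∧
    (∀ b ∈ Rset δ a, (∀ x, reesRel (Rideal δ a) (δ b x) b) → reesRel (Rideal δ a) b t) ∧
    (∀ b ∈ Rset δ a, ∀ x, reesRel (Rideal δ a) (δ b x) t)

/-- Semiconnected: every principal factor is strongly connected or strongly
trap-connected. -/
def Semiconnected {A X : Type*} (δ : A → X → A) : Prop :=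
  ∀ a, FactorSC δ a ∨ FactorSTC δ a

/-- The subautomaton on `D` is semiconnected, via the characterization: for
every subautomaton `C ⊆ D` and every `a ∈ C` there are `b ∈ C` and a nonempty
word `p` with `a = δ(b,p)`. -/
def SemiconnectedOn {A X : Type*} (δ : A → X → A) (D : Set A) : Prop :=
  ∀ C ⊆ D, IsSubaut δ C → ∀ a ∈ C, ∃ b ∈ C, ∃ p : List X, p ≠ [] ∧ deltaStar δ b p = a

/-- The automaton is a dilation of its subautomaton `B`. -/
def IsDilationOf {A X : Type*} (δ : A → X → A) (B : Set A) : Prop :=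
  IsSubaut δ B ∧ ∃ φ : A → A, (∀ a, φ a ∈ B) ∧ (∀ b ∈ B, φ b = b) ∧
    ∀ a x, δ a x = δ (φ a) x

/-- Extension of a partial transition function (`none` = the removed trap)
to words. -/
def pStar {C X : Type*} (d : C → X → Option C) : C → List X → Option C
  | a, [] => some a
  | a, x :: p => (d a x).bind fun b => pStar d b p

/-- The data of the Construction: a finite tree `(T, le)` with least element
`i0`; `C i` is the trap-removed part `A⁰ᵢ` of the automaton `Aᵢ`, with partial
transition `d i` (`none` means the trap); `A_{i0}` is strongly connected and
the other `Aᵢ` are non-trivial strongly trap-connected one-trap automata;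
`Φ i j` are the composite partial homomorphisms along covering chains
(given here as coherent data whose covering components satisfy conditions
(ii) and (iii)); `δ'` is the glued transition function on `A = ⋃ A⁰ᵢ`. -/
def ConstructionSpec {X : Type*} (T : Type*) (le : T → T → Prop) (i0 : T)
    (C : T → Type*) (d : ∀ i, C i → X → Option (C i))
    (Φ : ∀ i j, le j i → C i → C j)
    (δ' : (Σ i, C i) → X → Σ i, C i) : Prop :=
  (∀ i, le i i) ∧ (∀ i j, le i j → le j i → i = j) ∧
  (∀ i j k, le i j → le j k → le i k) ∧
  Finite T ∧
  (∀ S : Set T, S.Nonempty → (∃ u, ∀ i ∈ S, le i u) → ∃ g ∈ S, ∀ i ∈ S, le i g) ∧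
  (∀ i, le i0 i) ∧
  Nonempty (C i0) ∧
  (∀ (a : C i0) (x : X), (d i0 a x).isSome) ∧
  (∀ a b : C i0, ∃ p : List X, p ≠ [] ∧ pStar (d i0) a p = some b) ∧
  (∀ i, i ≠ i0 → Nonempty (C i) ∧
    (∀ a b : C i, ∃ p : List X, p ≠ [] ∧ pStar (d i) a p = some b) ∧
    (∀ a : C i, ∃ p : List X, p ≠ [] ∧ pStar (d i) a p = none)) ∧
  (∀ i (h : le i i) (a : C i), Φ i i h a = a) ∧
  (∀ i j k (h1 : le j i) (h2 : le k j) (h3 : le k i) (a : C i),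
    Φ j k h2 (Φ i j h1 a) = Φ i k h3 a) ∧
  (∀ i j (h : le j i), i ≠ j → (∀ k, le j k → le k i → k = j ∨ k = i) →
    (∀ (a : C i) (x : X) (b : C i),
      d i a x = some b → d j (Φ i j h a) x = some (Φ i j h b)) ∧
    ∃ (a : C i) (x : X), d i a x = none ∧ (d j (Φ i j h a) x).isSome) ∧
  (∀ i (a : C i) (x : X), ∃ (j : T) (hj : le j i) (b : C j),
    δ' ⟨i, a⟩ x = ⟨j, b⟩ ∧ d j (Φ i j hj a) x = some b ∧
    ∀ k (hk : le k i), (d k (Φ i k hk a) x).isSome → le k j)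

/-- Every subautomaton of a retractable automaton is retractable. -/
theorem stmt_0 {A X : Type*} (δ : A → X → A) (h : Retractable δ)
    (B : Set A) (hB : IsSubaut δ B) :
    Retractable (fun (b : B) (x : X) => (⟨δ b x, hB.2 b b.2 x⟩ : B)) := by
  intro C hC
  -- image of C in A
  set C' : Set A := Subtype.val '' C with hC'
  have hCsub : IsSubaut δ C' := by
    constructor
    · obtain ⟨c, hc⟩ := hC.1
      exact ⟨c.1, c, hc, rfl⟩
    · rintro b ⟨c, hcC, rfl⟩ x
      exact ⟨_, hC.2 c hcC x, rfl⟩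
  obtain ⟨φ, hφ1, hφ2, hφ3⟩ := h C' hCsub
  have hmem : ∀ a : A, φ a ∈ B := by
    intro a
    obtain ⟨c, hcC, hceq⟩ := hφ1 a
    exact hceq ▸ c.2
  refine ⟨fun b => ⟨φ b, hmem b⟩, ?_, ?_, ?_⟩
  · intro b
    obtain ⟨c, hcC, hceq⟩ := hφ1 b
    show (⟨φ (b : A), hmem b⟩ : B) ∈ C
    have : (⟨φ (b : A), hmem b⟩ : B) = c := Subtype.ext hceq.symm
    rw [this]; exact hcC
  · intro c hcC
    exact Subtype.ext (hφ2 c ⟨c, hcC, rfl⟩)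
  · intro b x
    exact Subtype.ext (hφ3 b x)
end

section
/- Let A be a retractable automaton and {a_i : i ∈ I} a family of states such that R(a_i) ⊆ R(b) for some fixed state b, where R(a) = δ(a, X*) is the principal subautomaton generated by a. Then there exists an index j ∈ I such that R(a_i) ⊆ R(a_j) for all i ∈ I. -/
universe u v

lemma deltaStar_append {A X : Type*} (δ : A → X → A) (a : A) (p q : List X) :
    deltaStar δ a (p ++ q) = deltaStar δ (deltaStar δ a p) q := by
  induction p generalizing a with
  | nil => rfl
  | cons x p ih => simp [deltaStar, ih]

lemma mem_Rset_self {A X : Type*} (δ : A → X → A) (a : A) : a ∈ Rset δ a :=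
  ⟨[], rfl⟩

lemma Rset_subset_of_mem {A X : Type*} (δ : A → X → A) {a c : A}
    (hc : c ∈ Rset δ a) : Rset δ c ⊆ Rset δ a := by
  obtain ⟨p, hp⟩ := hc
  rintro d ⟨q, hq⟩
  exact ⟨p ++ q, by rw [deltaStar_append, hp, hq]⟩

lemma hom_deltaStar {A X : Type*} (δ : A → X → A) (φ : A → A)
    (hφ : ∀ a x, φ (δ a x) = δ (φ a) x) (a : A) (p : List X) :
    φ (deltaStar δ a p) = deltaStar δ (φ a) p := by
  induction p generalizing a with
  | nil => rfl
  | cons x p ih => simp [deltaStar, ih, hφ]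

/-- Lemma 2. -/
theorem stmt_1 {A X : Type*} (δ : A → X → A) (h : Retractable δ)
    {I : Type*} [Nonempty I] (a : I → A) (b : A)
    (hab : ∀ i, Rset δ (a i) ⊆ Rset δ b) :
    ∃ j : I, ∀ i : I, Rset δ (a i) ⊆ Rset δ (a j) := by
  set B : Set A := ⋃ i, Rset δ (a i) with hB
  have hBsub : IsSubaut δ B := by
    constructor
    · obtain ⟨i⟩ := ‹Nonempty I›
      exact ⟨a i, Set.mem_iUnion.2 ⟨i, mem_Rset_self δ _⟩⟩
    · rintro c hc x
      obtain ⟨i, hi⟩ := Set.mem_iUnion.1 hc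
      obtain ⟨p, hp⟩ := hi
      exact Set.mem_iUnion.2 ⟨i, ⟨p ++ [x], by rw [deltaStar_append, hp]; rfl⟩⟩
  obtain ⟨φ, hφB, hφfix, hφhom⟩ := h B hBsub
  obtain ⟨j, hj⟩ := Set.mem_iUnion.1 (hφB b)
  refine ⟨j, fun i => ?_⟩
  -- a i ∈ R(b), so a i = deltaStar δ b p for some p
  obtain ⟨p, hp⟩ := hab i (mem_Rset_self δ (a i))
  have hai : a i ∈ Rset δ (φ b) := by
    have : φ (a i) = a i :=
      hφfix _ (Set.mem_iUnion.2 ⟨i, mem_Rset_self δ _⟩)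
    exact ⟨p, by rw [← hom_deltaStar δ φ hφhom, hp, this]⟩
  exact (Rset_subset_of_mem δ hai).trans (Rset_subset_of_mem δ hj)
end

section
/- Every principal subautomaton of a state-finite retractable automaton contains exactly one minimal subautomaton. -/
universe u v

lemma deltaStar_mem {A X : Type*} (δ : A → X → A) {S : Set A}
    (hS : ∀ b ∈ S, ∀ x : X, δ b x ∈ S) {b : A} (hb : b ∈ S) :
    ∀ p : List X, deltaStar δ b p ∈ S := by
  intro p
  induction p generalizing b with
  | nil => exact hb
  | cons x q ih => exact ih (hS b hb x)

lemma phi_deltaStar {A X : Type*} (δ : A → X → A) (φ : A → A)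
    (hφ : ∀ a x, φ (δ a x) = δ (φ a) x) (a : A) :
    ∀ p : List X, φ (deltaStar δ a p) = deltaStar δ (φ a) p := by
  intro p
  induction p generalizing a with
  | nil => rfl
  | cons x q ih => simp [deltaStar, ih, hφ]

lemma exists_minimal_subaut {A X : Type*} [Finite A] (δ : A → X → A)
    {B : Set A} (hB : IsSubaut δ B) :
    ∃ M ⊆ B, IsMinimalSubaut δ M := by
  classical
  have hne : ∃ n : ℕ, ∃ C ⊆ B, IsSubaut δ C ∧ C.ncard = n :=
    ⟨B.ncard, B, subset_rfl, hB, rfl⟩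
  obtain ⟨C, hCB, hC, hCn⟩ := Nat.find_spec hne
  refine ⟨C, hCB, hC, ?_⟩
  intro D hDC hD
  have hfin : C.Finite := Set.toFinite C
  have h1 : Nat.find hne ≤ D.ncard := Nat.find_le ⟨D, hDC.trans hCB, hD, rfl⟩
  exact Set.eq_of_subset_of_ncard_le hDC (hCn ▸ h1) hfin

/-- Lemma 3: every principal subautomaton of a state-finite
retractable automaton contains exactly one minimal subautomaton. -/
theorem stmt_4 {A X : Type*} [Finite A] [Nonempty A] [Nonempty X]
    (δ : A → X → A) (h : Retractable δ) (a : A) :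
    ∃! M : Set A, IsMinimalSubaut δ M ∧ M ⊆ Rset δ a := by
  have hRa : IsSubaut δ (Rset δ a) := by
    refine ⟨⟨a, [], rfl⟩, ?_⟩
    rintro b ⟨p, rfl⟩ x
    exact ⟨p ++ [x], by
      clear h
      induction p generalizing a with
      | nil => rfl
      | cons y q ih => simp [deltaStar, ih]⟩
  obtain ⟨M, hMR, hM⟩ := exists_minimal_subaut δ hRa
  refine ⟨M, ⟨hM, hMR⟩, ?_⟩
  rintro N ⟨hN, hNR⟩
  -- M ∪ N is a subautomaton; retract onto it
  have hMN : IsSubaut δ (M ∪ N) := by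
    refine ⟨hM.1.1.mono Set.subset_union_left, ?_⟩
    rintro b (hb | hb) x
    · exact Or.inl (hM.1.2 b hb x)
    · exact Or.inr (hN.1.2 b hb x)
  obtain ⟨φ, hφ1, hφ2, hφ3⟩ := h (M ∪ N) hMN
  have key : ∀ (P Q : Set A), IsMinimalSubaut δ P → IsMinimalSubaut δ Q →
      P ⊆ Rset δ a → Q ⊆ Rset δ a → (∀ b ∈ P, φ b = b) → φ a ∈ Q → P = Q := by
    intro P Q hP hQ hPR _ hfix hφa
    have hPQ : P ⊆ Q := by
      intro c hc
      obtain ⟨p, rfl⟩ := hPR hc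
      have : φ (deltaStar δ a p) = deltaStar δ (φ a) p := phi_deltaStar δ φ hφ3 a p
      have hc' : deltaStar δ a p = deltaStar δ (φ a) p := by
        rw [← hfix _ hc, this]
      rw [hc']
      exact deltaStar_mem δ hQ.1.2 hφa p
    exact hQ.2 P hPQ hP.1
  rcases hφ1 a with hφa | hφa
  · exact key N M hN hM hNR hMR (fun b hb => hφ2 b (Or.inr hb)) hφa
  · exact (key M N hM hN hMR hNR (fun b hb => hφ2 b (Or.inl hb)) hφa).symm
end

section
/- A strong direct sum of retractable automata is retractable. That is, if A is the disjoint union of subautomata A_i (i ∈ I), each A_i is retractable, and for every pair (i,j) there is a homomorphism of A_i into A_j, then A is retractable. -/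
universe u v

/-- Theorem 1: a strong direct sum of retractable automata is
retractable. -/
theorem stmt_6 {X : Type*} {I : Type*} (C : I → Type*) [∀ i, Nonempty (C i)]
    (δ : ∀ i, C i → X → C i)
    (hret : ∀ i, Retractable (δ i))
    (hhom : ∀ i j, ∃ φ : C i → C j, ∀ a x, φ (δ i a x) = δ j (φ a) x) :
    Retractable (fun (p : Σ i, C i) (x : X) => (⟨p.1, δ p.1 p.2 x⟩ : Σ i, C i)) := by
  intro B hB
  classical
  obtain ⟨⟨i0, c0⟩, hb0⟩ := hB.1
  -- for each i, a map into B with the needed properties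
  have key : ∀ i : I, ∃ F : C i → Σ j, C j,
      (∀ c, F c ∈ B) ∧ (∀ c, (⟨i, c⟩ : Σ j, C j) ∈ B → F c = ⟨i, c⟩) ∧
      (∀ c x, F (δ i c x) = ⟨(F c).1, δ (F c).1 (F c).2 x⟩) := by
    have sub : ∀ i (c : C i), (⟨i, c⟩ : Σ j, C j) ∈ B →
        IsSubaut (δ i) {c | (⟨i, c⟩ : Σ j, C j) ∈ B} := by
      intro i c hc
      exact ⟨⟨c, hc⟩, fun b hb x => hB.2 ⟨i, b⟩ hb x⟩
    intro i
    by_cases hS : ∃ c : C i, (⟨i, c⟩ : Σ j, C j) ∈ B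
    · obtain ⟨c, hc⟩ := hS
      obtain ⟨φ, hφ1, hφ2, hφ3⟩ := hret i _ (sub i c hc)
      exact ⟨fun c => ⟨i, φ c⟩, fun c => hφ1 c, fun c hc' => by
        simp [hφ2 c hc'], fun c x => by simp [hφ3 c x]⟩
    · obtain ⟨φ, hφ1, hφ2, hφ3⟩ := hret i0 _ (sub i0 c0 hb0)
      obtain ⟨ψ, hψ⟩ := hhom i i0
      refine ⟨fun c => ⟨i0, φ (ψ c)⟩, fun c => hφ1 (ψ c),
        fun c hc' => absurd ⟨c, hc'⟩ hS, fun c x => by simp [hψ, hφ3]⟩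
  choose F hF1 hF2 hF3 using key
  refine ⟨fun p => F p.1 p.2, fun p => hF1 p.1 p.2, fun b hb => ?_, fun p x => hF3 p.1 p.2 x⟩
  exact hF2 b.1 b.2 hb
end

section
/- A state-finite automaton A is retractable if and only if A is a direct sum of finitely many state-finite retractable automata, each containing a kernel, such that these kernels are pairwise isomorphic. -/
universe u v

namespace Stmt7Aux

variable {A X : Type*} (δ : A → X → A)

lemma deltaStar_append (a : A) (p q : List X) :
    deltaStar δ a (p ++ q) = deltaStar δ (deltaStar δ a p) q := by
  induction p generalizing a with
  | nil => rfl
  | cons x p ih => simp [deltaStar, ih]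

lemma mem_Rset_self (a : A) : a ∈ Rset δ a := ⟨[], rfl⟩

lemma Rset_subaut (a : A) : IsSubaut δ (Rset δ a) := by
  refine ⟨⟨a, mem_Rset_self δ a⟩, ?_⟩
  rintro b ⟨p, rfl⟩ x
  exact ⟨p ++ [x], by rw [deltaStar_append]; rfl⟩

lemma Rset_subset_of_subaut {B : Set A} (hB : IsSubaut δ B) {a : A} (ha : a ∈ B) :
    Rset δ a ⊆ B := by
  rintro b ⟨p, rfl⟩
  revert a
  induction p with
  | nil => intro a ha; exact ha
  | cons x p ih => intro a ha; exact ih (hB.2 a ha x)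


lemma hom_deltaStar {φ : A → A} (hφ : ∀ a x, φ (δ a x) = δ (φ a) x) (a : A) (p : List X) :
    φ (deltaStar δ a p) = deltaStar δ (φ a) p := by
  induction p generalizing a with
  | nil => rfl
  | cons x p ih => show φ (deltaStar δ (δ a x) p) = _ ; rw [ih, hφ]; rfl

lemma union_subaut {B C : Set A} (hB : IsSubaut δ B) (hC : IsSubaut δ C) :
    IsSubaut δ (B ∪ C) := by
  refine ⟨hB.1.mono Set.subset_union_left, ?_⟩
  rintro b (hb | hb) x
  · exact Or.inl (hB.2 b hb x)
  · exact Or.inr (hC.2 b hb x)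

lemma exists_minimal_subaut [Finite A] :
    ∀ (B : Set A), IsSubaut δ B → ∃ M ⊆ B, IsMinimalSubaut δ M := by
  have key : ∀ n (B : Set A), B.ncard ≤ n → IsSubaut δ B → ∃ M ⊆ B, IsMinimalSubaut δ M := by
    intro n
    induction n with
    | zero =>
      intro B hcard hB
      have := (Set.ncard_pos (Set.toFinite B)).mpr hB.1
      omega
    | succ n ih =>
      intro B hcard hB
      by_cases h : ∀ C ⊆ B, IsSubaut δ C → C = B
      · exact ⟨B, subset_rfl, hB, h⟩
      · push_neg at h
        obtain ⟨C, hCB, hC, hne⟩ := h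
        have hlt : C.ncard < B.ncard :=
          Set.ncard_lt_ncard (ssubset_of_subset_of_ne hCB hne) (Set.toFinite B)
        obtain ⟨M, hMC, hM⟩ := ih C (by omega) hC
        exact ⟨M, hMC.trans hCB, hM⟩
  exact fun B hB => key B.ncard B le_rfl hB

lemma minimal_unique [Finite A] (hret : Retractable δ) {a : A} {M N : Set A}
    (hM : IsMinimalSubaut δ M) (hN : IsMinimalSubaut δ N)
    (hMa : M ⊆ Rset δ a) (hNa : N ⊆ Rset δ a) : M = N := by
  obtain ⟨φ, hφ1, hφ2, hφ3⟩ := hret _ (union_subaut δ hM.1 hN.1)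
  have himg : ∀ {P : Set A}, IsSubaut δ P → φ a ∈ P → ∀ b ∈ Rset δ a, φ b ∈ P := by
    intro P hP hfa b hb
    obtain ⟨p, rfl⟩ := hb
    rw [hom_deltaStar δ hφ3]
    exact Rset_subset_of_subaut δ hP hfa ⟨p, rfl⟩
  rcases hφ1 a with hfa | hfa
  · -- N ⊆ M
    have hNM : N ⊆ M := fun b hb => by
      have := himg hM.1 hfa b (hNa hb)
      rwa [hφ2 b (Or.inr hb)] at this
    exact (hM.2 N hNM hN.1).symm
  · have hMN : M ⊆ N := fun b hb => by
      have := himg hN.1 hfa b (hMa hb)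
      rwa [hφ2 b (Or.inl hb)] at this
    exact hN.2 M hMN hM.1

end Stmt7Aux

/-- Theorem 2, (i) ⇔ (ii). -/
theorem stmt_7 {A X : Type*} [Finite A] [Nonempty A] [Nonempty X]
    (δ : A → X → A) :
    Retractable δ ↔
      ∃ (n : ℕ) (π : A → Fin n), Function.Surjective π ∧
        (∀ a x, π (δ a x) = π a) ∧
        (∀ i, RetractableOn δ (π ⁻¹' {i})) ∧
        ∃ K : Fin n → Set A,
          (∀ i, K i ⊆ π ⁻¹' {i} ∧ IsSubaut δ (K i) ∧
            ∀ C ⊆ π ⁻¹' {i}, IsSubaut δ C → K i ⊆ C) ∧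
          ∀ i j, ∃ φ : A → A, Set.BijOn φ (K i) (K j) ∧
            ∀ a ∈ K i, ∀ x, φ (δ a x) = δ (φ a) x := by
  classical
  constructor
  · intro hret
    have hmin : ∀ a : A, ∃ M, M ⊆ Rset δ a ∧ IsMinimalSubaut δ M := by
      intro a
      obtain ⟨M, h1, h2⟩ := Stmt7Aux.exists_minimal_subaut δ (Rset δ a) (Stmt7Aux.Rset_subaut δ a)
      exact ⟨M, h1, h2⟩
    choose μ hμsub hμmin using hmin
    have huniq : ∀ (a : A) (M : Set A), IsMinimalSubaut δ M → M ⊆ Rset δ a → M = μ a :=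
      fun a M hM hMa => Stmt7Aux.minimal_unique δ hret hM (hμmin a) hMa (hμsub a)
    have hμδ : ∀ a x, μ (δ a x) = μ a := by
      intro a x
      refine huniq a (μ (δ a x)) (hμmin _) ((hμsub _).trans ?_)
      exact Stmt7Aux.Rset_subset_of_subaut δ (Stmt7Aux.Rset_subaut δ a) ⟨[x], rfl⟩
    have hμmem : ∀ (M : Set A), IsMinimalSubaut δ M → ∀ b ∈ M, μ b = M := by
      intro M hM b hb
      exact hM.2 (μ b) ((hμsub b).trans (Stmt7Aux.Rset_subset_of_subaut δ hM.1 hb)) (hμmin b).1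
    have hker : ∀ (C : Set A), IsSubaut δ C → ∀ a ∈ C, μ a ⊆ C := by
      intro C hC a ha
      exact (hμsub a).trans (Stmt7Aux.Rset_subset_of_subaut δ hC ha)
    haveI : Fintype (Set.range μ) := (Set.finite_range μ).fintype
    let n := Fintype.card (Set.range μ)
    let e : Set.range μ ≃ Fin n := Fintype.equivFin (Set.range μ)
    refine ⟨n, fun a => e ⟨μ a, Set.mem_range_self a⟩, ?_, ?_, ?_, ?_⟩
    · -- surjective
      intro i
      obtain ⟨a, ha⟩ := (e.symm i).2
      refine ⟨a, ?_⟩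
      have h1 : (⟨μ a, Set.mem_range_self a⟩ : Set.range μ) = e.symm i := Subtype.ext ha
      show e ⟨μ a, Set.mem_range_self a⟩ = i
      rw [h1, e.apply_symm_apply]
    · intro a x
      show e ⟨μ (δ a x), Set.mem_range_self _⟩ = e ⟨μ a, Set.mem_range_self a⟩
      exact congrArg e (Subtype.ext (hμδ a x))
    · -- RetractableOn fibers
      intro i C _ hC
      obtain ⟨φ, h1, h2, h3⟩ := hret C hC
      exact ⟨φ, fun a _ => h1 a, h2, fun a _ x => h3 a x⟩
    · -- kernels
      have hKmin : ∀ k : Fin n, IsMinimalSubaut δ ((e.symm k : Set.range μ) : Set A) := by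
        intro k
        obtain ⟨a0, ha0⟩ := (e.symm k).2
        rw [← ha0]; exact hμmin a0
      refine ⟨fun i => ((e.symm i : Set.range μ) : Set A), ?_, ?_⟩
      · intro i
        refine ⟨?_, (hKmin i).1, ?_⟩
        · intro b hb
          have h1 : μ b = ((e.symm i : Set.range μ) : Set A) := hμmem _ (hKmin i) b hb
          have h2 : (⟨μ b, Set.mem_range_self b⟩ : Set.range μ) = e.symm i := Subtype.ext h1
          show e ⟨μ b, Set.mem_range_self b⟩ ∈ ({i} : Set (Fin n))
          rw [h2, e.apply_symm_apply]; rfl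
        · intro C hCfib hC
          obtain ⟨a, ha⟩ := hC.1
          have hπa : e ⟨μ a, Set.mem_range_self a⟩ = i := hCfib ha
          have hμa : μ a = ((e.symm i : Set.range μ) : Set A) := by
            have h2 : (⟨μ a, Set.mem_range_self a⟩ : Set.range μ) = e.symm i := by
              rw [← hπa, e.symm_apply_apply]
            exact congrArg Subtype.val h2
          show ((e.symm i : Set.range μ) : Set A) ⊆ C
          rw [← hμa]
          exact hker C hC a ha
      · -- pairwise isomorphic kernels
        intro i j
        have surj : ∀ (P Q : Set A), IsMinimalSubaut δ P → IsMinimalSubaut δ Q →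
            ∃ φ : A → A, φ '' P = Q ∧ (∀ a, φ a ∈ Q) ∧ ∀ a x, φ (δ a x) = δ (φ a) x := by
          intro P Q hP hQ
          obtain ⟨φ, h1, h2, h3⟩ := hret Q hQ.1
          have himg : IsSubaut δ (φ '' P) := by
            constructor
            · obtain ⟨p0, hp0⟩ := hP.1.1
              exact ⟨φ p0, ⟨p0, hp0, rfl⟩⟩
            · rintro b ⟨a, ha, rfl⟩ x
              exact ⟨δ a x, hP.1.2 a ha x, h3 a x⟩
          have hsub : φ '' P ⊆ Q := by rintro b ⟨a, _, rfl⟩; exact h1 a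
          exact ⟨φ, hQ.2 _ hsub himg, h1, h3⟩
        set Ki := ((e.symm i : Set.range μ) : Set A) with hKi
        set Kj := ((e.symm j : Set.range μ) : Set A) with hKj
        obtain ⟨φ, hφeq, hφQ, hφhom⟩ := surj Ki Kj (hKmin i) (hKmin j)
        obtain ⟨ψ, hψeq, _, _⟩ := surj Kj Ki (hKmin j) (hKmin i)
        have hcard : (φ '' Ki).ncard = Ki.ncard := by
          have h1 : Kj.ncard ≤ Ki.ncard := by
            rw [← hφeq]; exact Set.ncard_image_le (Set.toFinite Ki)
          have h2 : Ki.ncard ≤ Kj.ncard := by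
            rw [← hψeq]; exact Set.ncard_image_le (Set.toFinite Kj)
          rw [hφeq]; omega
        have hinj : Set.InjOn φ Ki := Set.injOn_of_ncard_image_eq hcard (Set.toFinite Ki)
        refine ⟨φ, ⟨?_, hinj, ?_⟩, fun a _ x => hφhom a x⟩
        · intro a ha
          show φ a ∈ Kj
          rw [← hφeq]
          exact Set.mem_image_of_mem φ ha
        · show Kj ⊆ φ '' Ki
          rw [hφeq]
  · -- reverse direction
    rintro ⟨n, π, hsurj, hπδ, hret, K, hK, hiso⟩
    intro B hB
    obtain ⟨b0, hb0⟩ := hB.1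
    set i1 := π b0 with hi1
    have hBfib : ∀ i, (B ∩ π ⁻¹' {i}).Nonempty → IsSubaut δ (B ∩ π ⁻¹' {i}) := by
      intro i h
      refine ⟨h, ?_⟩
      rintro b ⟨hbB, hbi⟩ x
      refine ⟨hB.2 b hbB x, ?_⟩
      simp only [Set.mem_preimage, Set.mem_singleton_iff] at hbi ⊢
      rw [hπδ]; exact hbi
    have hKi1B : K i1 ⊆ B := by
      have hne : (B ∩ π ⁻¹' {i1}).Nonempty := ⟨b0, hb0, rfl⟩
      exact ((hK i1).2.2 _ Set.inter_subset_right (hBfib i1 hne)).trans Set.inter_subset_left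
    have hfib : ∀ i : Fin n, ∃ φ : A → A,
        (∀ a ∈ π ⁻¹' {i}, φ a ∈ B) ∧
        (∀ b ∈ B ∩ π ⁻¹' {i}, φ b = b) ∧
        (∀ a ∈ π ⁻¹' {i}, ∀ x, φ (δ a x) = δ (φ a) x) := by
      intro i
      by_cases h : (B ∩ π ⁻¹' {i}).Nonempty
      · obtain ⟨φ, h1, h2, h3⟩ := hret i _ Set.inter_subset_right (hBfib i h)
        exact ⟨φ, fun a ha => (h1 a ha).1, fun b hb => h2 b hb, h3⟩
      · obtain ⟨ψ, h1, h2, h3⟩ := hret i (K i) (hK i).1 (hK i).2.1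
        obtain ⟨θ, hθbij, hθhom⟩ := hiso i i1
        refine ⟨θ ∘ ψ, ?_, ?_, ?_⟩
        · intro a ha
          exact hKi1B (hθbij.mapsTo (h1 a ha))
        · intro b hb; exact absurd ⟨b, hb⟩ h
        · intro a ha x
          have haK : ψ a ∈ K i := h1 a ha
          simp only [Function.comp_apply]
          rw [h3 a ha x, hθhom (ψ a) haK x]
    choose Φ hΦ1 hΦ2 hΦ3 using hfib
    refine ⟨fun a => Φ (π a) a, ?_, ?_, ?_⟩
    · intro a; exact hΦ1 (π a) a rfl
    · intro b hb; exact hΦ2 (π b) b ⟨hb, rfl⟩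
    · intro a x
      have h : π (δ a x) = π a := hπδ a x
      show Φ (π (δ a x)) (δ a x) = δ (Φ (π a) a) x
      rw [h]
      exact hΦ3 (π a) a rfl x
end

section
/- An automaton A is semiconnected (every principal factor is strongly connected or strongly trap-connected) if and only if for every subautomaton B of A and every a ∈ B there exist b ∈ B and a nonempty word p ∈ X+ such that a = δ(b,p). -/
universe u v

lemma Rset_trans {A X : Type*} (δ : A → X → A) {a b : A} (h : b ∈ Rset δ a) :
    Rset δ b ⊆ Rset δ a := by
  rintro c ⟨q, rfl⟩
  obtain ⟨p, rfl⟩ := h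
  exact ⟨p ++ q, deltaStar_append δ a p q⟩

lemma delta_mem_Rset {A X : Type*} (δ : A → X → A) (b : A) (x : X) :
    δ b x ∈ Rset δ b := ⟨[x], rfl⟩

lemma Rset_eq_of_not_ideal {A X : Type*} (δ : A → X → A) {a b : A}
    (hb : b ∈ Rset δ a) (h : b ∉ Rideal δ a) : Rset δ b = Rset δ a := by
  by_contra hne
  exact h ⟨hb, hne⟩

lemma not_mem_Rideal_self {A X : Type*} (δ : A → X → A) (a : A) :
    a ∉ Rideal δ a := fun h => h.2 rfl

lemma Rideal_closed {A X : Type*} (δ : A → X → A) {a b : A}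
    (hb : b ∈ Rideal δ a) (x : X) : δ b x ∈ Rideal δ a := by
  obtain ⟨hbR, hbc⟩ := hb
  have h1 : δ b x ∈ Rset δ a := Rset_trans δ hbR (delta_mem_Rset δ b x)
  refine ⟨h1, fun hc => hbc ?_⟩
  have h2 : Rset δ a ⊆ Rset δ b := by
    rw [← hc]; exact Rset_trans δ (delta_mem_Rset δ b x)
  exact le_antisymm (Rset_trans δ hbR) h2

lemma Rset_subaut {A X : Type*} (δ : A → X → A) (a : A) : IsSubaut δ (Rset δ a) :=
  ⟨⟨a, mem_Rset_self δ a⟩, fun b hb x => Rset_trans δ hb (delta_mem_Rset δ b x)⟩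

lemma Rset_subset_subaut {A X : Type*} (δ : A → X → A) {B : Set A}
    (hB : IsSubaut δ B) {a : A} (ha : a ∈ B) : Rset δ a ⊆ B := by
  rintro c ⟨p, rfl⟩
  induction p generalizing a with
  | nil => exact ha
  | cons x p ih => exact ih (hB.2 a ha x)

/-- Reach by a nonempty word, from the RHS hypothesis. -/
lemma reach_pos {A X : Type*} (δ : A → X → A)
    (H : ∀ B, IsSubaut δ B → ∀ a ∈ B,
        ∃ b ∈ B, ∃ p : List X, p ≠ [] ∧ deltaStar δ b p = a)
    {a b c : A} (hb : Rset δ b = Rset δ a) (hc : c ∈ Rset δ a) :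
    ∃ p : List X, p ≠ [] ∧ deltaStar δ b p = c := by
  obtain ⟨b', hb', q, hq, hbq⟩ := H (Rset δ a) (Rset_subaut δ a) c hc
  rw [← hb] at hb'
  obtain ⟨r, hr⟩ := hb'
  refine ⟨r ++ q, by simp [hq], ?_⟩
  rw [deltaStar_append, hr, hbq]

lemma deltaStar_fixed {A X : Type*} (δ : A → X → A) {b : A}
    (h : ∀ x, δ b x = b) (p : List X) : deltaStar δ b p = b := by
  induction p with
  | nil => rfl
  | cons x p ih => simpa [deltaStar, h x] using ih

/-- Theorem 4. -/
theorem stmt_12 {A X : Type*} (δ : A → X → A) :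
    Semiconnected δ ↔
      ∀ B, IsSubaut δ B → ∀ a ∈ B,
        ∃ b ∈ B, ∃ p : List X, p ≠ [] ∧ deltaStar δ b p = a := by
  constructor
  · intro hsc B hB a ha
    have hRB : Rset δ a ⊆ B := Rset_subset_subaut δ hB ha
    have hanI : a ∉ Rideal δ a := not_mem_Rideal_self δ a
    rcases hsc a with hSC | hSTC
    · rcases hSC a (mem_Rset_self δ a) a (mem_Rset_self δ a) with ⟨p, hp, heq | ⟨_, hI⟩⟩
      · exact ⟨a, ha, p, hp, heq⟩
      · exact absurd hI hanI
    · obtain ⟨t, ht, _, ⟨b0, hb0, hb0t⟩, _, hconn⟩ := hSTC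
      by_cases hat : reesRel (Rideal δ a) a t
      · rcases hconn b0 hb0 a (mem_Rset_self δ a) hb0t with ⟨p, hp, heq | ⟨_, hI⟩⟩
        · exact ⟨b0, hRB hb0, p, hp, heq⟩
        · exact absurd hI hanI
      · rcases hconn a (mem_Rset_self δ a) a (mem_Rset_self δ a) hat with
          ⟨p, hp, heq | ⟨_, hI⟩⟩
        · exact ⟨a, ha, p, hp, heq⟩
        · exact absurd hI hanI
  · intro H a
    by_cases hI : (Rideal δ a).Nonempty
    · right
      obtain ⟨t, htI⟩ := hI
      refine ⟨t, htI.1, fun x => Or.inr ⟨Rideal_closed δ htI x, htI⟩,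
        ⟨a, mem_Rset_self δ a, ?_⟩, ?_, ?_⟩
      · rintro (rfl | ⟨haI, _⟩)
        · exact not_mem_Rideal_self δ a htI
        · exact not_mem_Rideal_self δ a haI
      · intro b hb hfix
        by_cases hbI : b ∈ Rideal δ a
        · exact Or.inr ⟨hbI, htI⟩
        · have hfix' : ∀ x, δ b x = b := by
            intro x
            rcases hfix x with h | ⟨_, hb'⟩
            · exact h
            · exact absurd hb' hbI
          have hbeq : Rset δ b = Rset δ a := Rset_eq_of_not_ideal δ hb hbI
          have : t ∈ Rset δ b := hbeq ▸ htI.1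
          obtain ⟨p, hp⟩ := this
          rw [deltaStar_fixed δ hfix' p] at hp
          exact absurd (hp ▸ htI) hbI
      · intro b hb c hc hbt
        have hbI : b ∉ Rideal δ a := fun h => hbt (Or.inr ⟨h, htI⟩)
        obtain ⟨p, hp, hpe⟩ := reach_pos δ H (Rset_eq_of_not_ideal δ hb hbI) hc
        exact ⟨p, hp, Or.inl hpe⟩
    · left
      intro b hb c hc
      have hbI : b ∉ Rideal δ a := fun h => hI ⟨b, h⟩
      obtain ⟨p, hp, hpe⟩ := reach_pos δ H (Rset_eq_of_not_ideal δ hb hbI) hc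
      exact ⟨p, hp, Or.inl hpe⟩
end

section
/- Every dilation of a retractable automaton is retractable. -/
universe u v

/-- Theorem 5: every dilation of a retractable automaton is
retractable. -/
theorem stmt_13 {A X : Type*} (δ : A → X → A) (B : Set A)
    (hdil : IsDilationOf δ B) (hB : RetractableOn δ B) :
    Retractable δ := by
  classical
  obtain ⟨hBsub, φ, hφB, hφfix, hφδ⟩ := hdil
  intro C hC
  obtain ⟨⟨c0, hc0⟩, hCclosed⟩ := hC
  by_cases hX : Nonempty X
  · -- C ∩ B is a nonempty subautomaton contained in B
    obtain ⟨x0⟩ := hX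
    have hCB : IsSubaut δ (C ∩ B) := by
      refine ⟨⟨δ c0 x0, hCclosed c0 hc0 x0, ?_⟩, ?_⟩
      · rw [hφδ c0 x0]; exact hBsub.2 (φ c0) (hφB c0) x0
      · rintro b ⟨hbC, hbB⟩ x
        exact ⟨hCclosed b hbC x, hBsub.2 b hbB x⟩
    obtain ⟨ψ, hψC, hψfix, hψδ⟩ := hB (C ∩ B) (fun a ha => ha.2) hCB
    refine ⟨fun a => if a ∈ C then a else ψ (φ a), ?_, ?_, ?_⟩
    · intro a
      by_cases h : a ∈ C
      · simpa [h]
      · simpa [h] using (hψC (φ a) (hφB a)).1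
    · intro b hb; simp [hb]
    · intro a x
      by_cases h : a ∈ C
      · have h1 : δ a x ∈ C := hCclosed a h x
        simp [h, h1]
      · have hu : δ (φ a) x ∈ B := hBsub.2 (φ a) (hφB a) x
        have key : δ a x = δ (φ a) x := hφδ a x
        have hrhs : ψ (δ (φ a) x) = δ (ψ (φ a)) x := hψδ (φ a) (hφB a) x
        by_cases h2 : δ a x ∈ C
        · have : ψ (δ (φ a) x) = δ (φ a) x := by
            apply hψfix; rw [← key]; exact ⟨h2, key ▸ hu⟩
          simp only [if_neg h, if_pos h2]
          rw [key, ← hrhs, this]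
        · simp only [if_neg h, if_neg h2]
          have : φ (δ a x) = δ (φ a) x := by rw [key]; exact hφfix _ hu
          rw [this, hrhs]
  · -- X is empty: transition conditions are vacuous
    refine ⟨fun a => if a ∈ C then a else c0, ?_, ?_, ?_⟩
    · intro a; by_cases h : a ∈ C <;> simp [h, hc0]
    · intro b hb; simp [hb]
    · intro a x; exact absurd ⟨x⟩ hX
end

section
/- Every retractable automaton is a dilation of a semiconnected retractable automaton; specifically, a retractable automaton A is a dilation of the subautomaton B with state set δ(A,X) = {δ(a,x) : a ∈ A, x ∈ X}, and B is semiconnected and retractable. -/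
universe u v

/-- Theorem 6: a retractable automaton is a dilation of the
semiconnected retractable subautomaton on `δ(A,X)`. -/
theorem stmt_14 {A X : Type*} [Nonempty A] [Nonempty X]
    (δ : A → X → A) (h : Retractable δ) :
    IsDilationOf δ {b | ∃ a x, δ a x = b} ∧
    RetractableOn δ {b | ∃ a x, δ a x = b} ∧
    SemiconnectedOn δ {b | ∃ a x, δ a x = b} := by
  set B : Set A := {b | ∃ a x, δ a x = b} with hBdef
  have hBsub : IsSubaut δ B := by
    constructor
    · obtain ⟨a⟩ := ‹Nonempty A›; obtain ⟨x⟩ := ‹Nonempty X›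
      exact ⟨δ a x, a, x, rfl⟩
    · intro b _ x; exact ⟨b, x, rfl⟩
  refine ⟨?_, ?_, ?_⟩
  · obtain ⟨φ, hφB, hφfix, hφhom⟩ := h B hBsub
    refine ⟨hBsub, φ, hφB, hφfix, fun a x => ?_⟩
    have hmem : δ a x ∈ B := ⟨a, x, rfl⟩
    calc δ a x = φ (δ a x) := (hφfix _ hmem).symm
      _ = δ (φ a) x := hφhom a x
  · intro C _ hC
    obtain ⟨φ, hφC, hφfix, hφhom⟩ := h C hC
    exact ⟨φ, fun a _ => hφC a, hφfix, fun a _ x => hφhom a x⟩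
  · intro C hCB hC a haC
    obtain ⟨a0, x, hax⟩ := hCB haC
    obtain ⟨φ, hφC, hφfix, hφhom⟩ := h C hC
    refine ⟨φ a0, hφC a0, [x], by simp, ?_⟩
    show δ (φ a0) x = a
    calc δ (φ a0) x = φ (δ a0 x) := (hφhom a0 x).symm
      _ = φ a := by rw [hax]
      _ = a := hφfix a haC
end

section
/- An automaton is retractable if and only if it is a dilation of a semiconnected retractable automaton. -/
universe u v

/-- Corollary 3: an automaton is retractable iff it is a
dilation of a semiconnected retractable automaton. -/
theorem stmt_15 {A X : Type*} [Nonempty A] [Nonempty X] (δ : A → X → A) :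
    Retractable δ ↔
      ∃ B : Set A, IsDilationOf δ B ∧ RetractableOn δ B ∧ SemiconnectedOn δ B := by
  classical
  constructor
  · intro hR
    set B : Set A := {a | ∃ c x, δ c x = a} with hBdef
    have hsub : IsSubaut δ B := by
      constructor
      · obtain ⟨a0⟩ := ‹Nonempty A›; obtain ⟨x0⟩ := ‹Nonempty X›
        exact ⟨δ a0 x0, a0, x0, rfl⟩
      · intro b _ x; exact ⟨b, x, rfl⟩
    obtain ⟨φ, hφ1, hφ2, hφ3⟩ := hR B hsub
    refine ⟨B, ⟨hsub, φ, hφ1, hφ2, fun a x => ?_⟩, ?_, ?_⟩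
    · rw [← hφ3]; exact (hφ2 _ ⟨a, x, rfl⟩).symm
    · intro C _ hC
      obtain ⟨ψ, h1, h2, h3⟩ := hR C hC
      exact ⟨ψ, fun a _ => h1 a, h2, fun a _ x => h3 a x⟩
    · intro C hCB hC a haC
      obtain ⟨ψ, h1, h2, h3⟩ := hR C hC
      obtain ⟨c, x, hcx⟩ := hCB haC
      refine ⟨ψ c, h1 c, [x], by simp, ?_⟩
      show deltaStar δ (δ (ψ c) x) [] = a
      rw [show deltaStar δ (δ (ψ c) x) [] = δ (ψ c) x from rfl, ← h3, hcx, h2 a haC]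
  · rintro ⟨B, ⟨hBsub, φ, hφ1, hφ2, hφ3⟩, hRet, _⟩
    intro C hC
    obtain ⟨x0⟩ := ‹Nonempty X›
    have hmemB : ∀ (a : A) (x : X), δ a x ∈ B := fun a x => by
      rw [hφ3 a x]; exact hBsub.2 _ (hφ1 a) x
    have hCB : IsSubaut δ (C ∩ B) := by
      constructor
      · obtain ⟨c, hc⟩ := hC.1
        exact ⟨δ c x0, hC.2 c hc x0, hmemB c x0⟩
      · intro b hb x; exact ⟨hC.2 b hb.1 x, hmemB b x⟩
    obtain ⟨ψ, h1, h2, h3⟩ := hRet (C ∩ B) Set.inter_subset_right hCB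
    refine ⟨fun a => if a ∈ C then a else ψ (φ a), ?_, ?_, ?_⟩
    · intro a
      by_cases ha : a ∈ C
      · simp [ha]
      · simpa [ha] using (h1 (φ a) (hφ1 a)).1
    · intro b hb; simp [hb]
    · intro a x
      by_cases ha : a ∈ C
      · simp [ha, hC.2 a ha x]
      · simp only [ha, if_neg, if_false]
        have key : δ (ψ (φ a)) x = ψ (δ a x) := by
          rw [← h3 (φ a) (hφ1 a) x, ← hφ3 a x]
        by_cases hax : δ a x ∈ C
        · rw [if_pos hax, key, h2 (δ a x) ⟨hax, hmemB a x⟩]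
        · rw [if_neg hax, key, hφ2 (δ a x) (hmemB a x)]
end

section
/- In the automaton A = (A_i, X, δ_i; φ_{i,j}, T) of the Construction, every subautomaton R of A has state set of the form ∪_{j∈Γ} A^0_j for some nonempty ideal Γ of the tree T (i.e., i ∈ Γ and j ≤ i imply j ∈ Γ). -/
universe u v

/-- in the automaton of the Construction, every subautomaton has
state set `⋃_{j ∈ Γ} A⁰ⱼ` for some nonempty ideal `Γ` of the tree `T`. -/
theorem stmt_16 {X T : Type*} (le : T → T → Prop) (i0 : T)
    (C : T → Type*) (d : ∀ i, C i → X → Option (C i))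
    (Φ : ∀ i j, le j i → C i → C j) (δ' : (Σ i, C i) → X → Σ i, C i)
    (h : ConstructionSpec T le i0 C d Φ δ') :
    ∀ R : Set (Σ i, C i), IsSubaut δ' R →
      ∃ Γ : Set T, Γ.Nonempty ∧ (∀ i ∈ Γ, ∀ j, le j i → j ∈ Γ) ∧
        R = {p : Σ i, C i | p.1 ∈ Γ} := by
  
  classical
  obtain ⟨hrefl, hanti, htrans, hfin, hgreatest, hle0, ⟨a0⟩, htotal0, hconn0,
    hconn, hΦid, hΦcomp, hcov, hδ'⟩ := h
  intro R hR
  obtain ⟨hRne, hRclosed⟩ := hR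
  -- R is closed under deltaStar
  have hRstar : ∀ p : List X, ∀ a ∈ R, deltaStar δ' a p ∈ R := by
    intro p
    induction p with
    | nil => intro a ha; exact ha
    | cons x q ih => intro a ha; exact ih _ (hRclosed a ha x)
  -- within-component transitions
  have hin : ∀ (i : T) (a : C i) (x : X) (b : C i),
      d i a x = some b → δ' ⟨i, a⟩ x = ⟨i, b⟩ := by
    intro i a x b hb
    obtain ⟨j, hj, b', heq, hd, hmax⟩ := hδ' i a x
    have hii : (d i (Φ i i (hrefl i) a) x).isSome := by
      rw [hΦid i (hrefl i) a, hb]; rfl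
    have hji : j = i := hanti j i hj (hmax i (hrefl i) hii)
    subst hji
    rw [hΦid j hj a, hb] at hd
    rw [heq, Option.some_inj.mp hd]
  have hinStar : ∀ (p : List X) (i : T) (a b : C i),
      pStar (d i) a p = some b → deltaStar δ' ⟨i, a⟩ p = ⟨i, b⟩ := by
    intro p
    induction p with
    | nil =>
      intro i a b hb
      simp only [pStar, Option.some_inj] at hb
      subst hb
      rfl
    | cons x q ih =>
      intro i a b hb
      simp only [pStar] at hb
      cases hc : d i a x with
      | none => rw [hc] at hb; simp at hb
      | some c =>
        rw [hc] at hb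
        show deltaStar δ' (δ' ⟨i, a⟩ x) q = _
        rw [hin i a x c hc]
        exact ih i c b hb
  -- connectivity within each component
  have connAll : ∀ (i : T) (a b : C i), ∃ p : List X, pStar (d i) a p = some b := by
    intro i a b
    by_cases hi : i = i0
    · subst hi
      obtain ⟨p, _, hp⟩ := hconn0 a b
      exact ⟨p, hp⟩
    · obtain ⟨p, _, hp⟩ := (hconn i hi).2.1 a b
      exact ⟨p, hp⟩
  -- component closure
  have hcomp : ∀ (i : T) (a : C i), (⟨i, a⟩ : Σ i, C i) ∈ R →
      ∀ b : C i, (⟨i, b⟩ : Σ i, C i) ∈ R := by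
    intro i a ha b
    obtain ⟨p, hp⟩ := connAll i a b
    have := hRstar p _ ha
    rwa [hinStar p i a b hp] at this
  set Γ : Set T := {i | ∃ a : C i, (⟨i, a⟩ : Σ i, C i) ∈ R} with hΓ
  -- covering step down
  have hstep : ∀ i ∈ Γ, ∀ g, le g i → g ≠ i →
      (∀ k, le g k → le k i → k = g ∨ k = i) → g ∈ Γ := by
    intro i hi g hgi hne hcover
    obtain ⟨_, a, x, hnone, hsome⟩ := hcov i g hgi (Ne.symm hne) hcover
    obtain ⟨j, hj, b, heq, hd, hmax⟩ := hδ' i a x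
    have hgj : le g j := hmax g hgi hsome
    have hjne : j ≠ i := by
      intro hji
      subst hji
      rw [hΦid j hj a, hnone] at hd
      simp at hd
    have hjg : j = g := (hcover j hgj hj).resolve_right hjne
    subst hjg
    obtain ⟨a', ha'⟩ := hi
    have haR : (⟨i, a⟩ : Σ i, C i) ∈ R := hcomp i a' ha' a
    have : δ' ⟨i, a⟩ x ∈ R := hRclosed _ haR x
    rw [heq] at this
    exact ⟨b, this⟩
  -- downward closure by strong induction on the size of the strict down-set
  have : Finite T := hfin
  have hdown : ∀ n (i : T), ({k | le k i ∧ k ≠ i}).ncard ≤ n → i ∈ Γ →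
      ∀ j, le j i → j ∈ Γ := by
    intro n
    induction n using Nat.strong_induction_on with
    | _ n IH =>
      intro i hcard hi j hji
      by_cases hne : j = i
      · exact hne ▸ hi
      · -- find the greatest element g of S, covered by i
        have hSne : (Set.Nonempty {k | le j k ∧ le k i ∧ k ≠ i}) :=
          ⟨j, hrefl j, hji, hne⟩
        obtain ⟨g, ⟨hjg, hgi, hgne⟩, hgmax⟩ :=
          hgreatest _ hSne ⟨i, fun k hk => hk.2.1⟩
        have hcover : ∀ k, le g k → le k i → k = g ∨ k = i := by
          intro k hgk hki
          by_cases hki' : k = i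
          · exact Or.inr hki'
          · exact Or.inl (hanti k g (hgmax k ⟨htrans j g k hjg hgk, hki, hki'⟩) hgk)
        have hgΓ : g ∈ Γ := hstep i hi g hgi hgne hcover
        -- strict decrease of the measure
        have hsub : {k | le k g ∧ k ≠ g} ⊂ {k | le k i ∧ k ≠ i} := by
          constructor
          · intro k hk
            refine ⟨htrans k g i hk.1 hgi, ?_⟩
            intro hki
            subst hki
            exact hgne (hanti g k hgi hk.1)
          · intro hcon
            exact (hcon ⟨hgi, hgne⟩).2 rfl
        have hlt : ({k | le k g ∧ k ≠ g}).ncard < ({k | le k i ∧ k ≠ i}).ncard :=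
          Set.ncard_lt_ncard hsub (Set.toFinite _)
        exact IH _ (lt_of_lt_of_le hlt hcard) g le_rfl hgΓ j hjg
  refine ⟨Γ, ?_, ?_, ?_⟩
  · obtain ⟨⟨i, a⟩, ha⟩ := hRne
    exact ⟨i, a, ha⟩
  · intro i hi j hji
    exact hdown _ i le_rfl hi j hji
  · ext ⟨i, a⟩
    constructor
    · intro ha
      exact ⟨a, ha⟩
    · rintro ⟨b, hb⟩
      exact hcomp i b hb a
end

section
/- Every automaton (A_i, X, δ_i; φ_{i,j}, T) built by the Construction is a semiconnected retractable automaton whose kernel is A_{i_0}. -/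
universe u v

/-- every automaton of the Construction is a semiconnected
retractable automaton whose kernel is `A_{i0}`. -/
theorem stmt_17 {X T : Type*} (le : T → T → Prop) (i0 : T)
    (C : T → Type*) (d : ∀ i, C i → X → Option (C i))
    (Φ : ∀ i j, le j i → C i → C j) (δ' : (Σ i, C i) → X → Σ i, C i)
    (h : ConstructionSpec T le i0 C d Φ δ') :
    Retractable δ' ∧
    (∀ R : Set (Σ i, C i), IsSubaut δ' R → ∀ a ∈ R,
      ∃ b ∈ R, ∃ p : List X, p ≠ [] ∧ deltaStar δ' b p = a) ∧
    IsSubaut δ' {p : Σ i, C i | p.1 = i0} ∧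
    (∀ R : Set (Σ i, C i), IsSubaut δ' R → {p : Σ i, C i | p.1 = i0} ⊆ R) := by

  obtain ⟨hrefl, hanti, htrans, hfin, hmax, hi0le, hne, hi0some, hi0conn, hother,
    hΦid, hΦcomp, hcover, hδ⟩ := h
  -- basic: deltaStar over append
  have dsApp : ∀ (p q : List X) (a : Σ i, C i),
      deltaStar δ' a (p ++ q) = deltaStar δ' (deltaStar δ' a p) q := by
    intro p
    induction p with
    | nil => intro q a; rfl
    | cons x r ih => intro q a; simp only [List.cons_append, deltaStar]; exact ih q (δ' a x)
  -- step lemma: inside a level, δ' agrees with d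
  have step : ∀ i (a : C i) (x : X) (b : C i), d i a x = some b →
      δ' ⟨i, a⟩ x = ⟨i, b⟩ := by
    intro i a x b hd
    obtain ⟨j, hj, c, he, hc, hmx⟩ := hδ i a x
    have hij : le i j := hmx i (hrefl i) (by rw [hΦid i (hrefl i) a, hd]; rfl)
    have hji : i = j := hanti i j hij hj
    subst hji
    rw [hΦid i hj a, hd] at hc
    obtain rfl : b = c := by injection hc
    exact he
  -- lift of defined pStar paths
  have lift : ∀ (p : List X) i (a b : C i), pStar (d i) a p = some b →
      deltaStar δ' ⟨i, a⟩ p = ⟨i, b⟩ := by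
    intro p
    induction p with
    | nil =>
      intro i a b hp
      simp only [pStar] at hp
      obtain rfl : a = b := by injection hp
      rfl
    | cons x q ih =>
      intro i a b hp
      simp only [pStar] at hp
      cases hx : d i a x with
      | none => rw [hx] at hp; simp at hp
      | some c =>
        rw [hx] at hp
        simp only [Option.bind_some] at hp
        have h2 := ih i c b hp
        simp only [deltaStar]
        rw [step i a x c hx]
        exact h2
  -- connectivity inside a level
  have conn : ∀ i (a b : C i), ∃ p : List X, p ≠ [] ∧ pStar (d i) a p = some b := by
    intro i a b
    by_cases hi : i = i0
    · subst hi; exact hi0conn a b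
    · exact (hother i hi).2.1 a b
  -- subautomata are closed under deltaStar
  have subclosed : ∀ B : Set (Σ i, C i), IsSubaut δ' B → ∀ a ∈ B, ∀ p : List X,
      deltaStar δ' a p ∈ B := by
    intro B hB a ha p
    induction p generalizing a with
    | nil => exact ha
    | cons x q ih => exact ih (δ' a x) (hB.2 a ha x)
  -- a subautomaton containing one state of a level contains the whole level
  have full : ∀ B : Set (Σ i, C i), IsSubaut δ' B → ∀ i (a : C i),
      (⟨i, a⟩ : Σ i, C i) ∈ B → ∀ b : C i, (⟨i, b⟩ : Σ i, C i) ∈ B := by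
    intro B hB i a ha b
    obtain ⟨p, _, hp⟩ := conn i a b
    have h2 := subclosed B hB _ ha p
    rwa [lift p i a b hp] at h2
  -- escape: a trap word forces a strict descent
  have escape : ∀ (p : List X) i (a : C i), pStar (d i) a p = none →
      ∃ (q : List X) (j : T) (b : C j), le j i ∧ j ≠ i ∧
        deltaStar δ' ⟨i, a⟩ q = ⟨j, b⟩ := by
    intro p
    induction p with
    | nil => intro i a hp; simp [pStar] at hp
    | cons x q ih =>
      intro i a hp
      simp only [pStar] at hp
      cases hx : d i a x with
      | none =>
        obtain ⟨j, hj, b, he, hb, _⟩ := hδ i a x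
        refine ⟨[x], j, b, hj, ?_, ?_⟩
        · intro hji; subst hji
          rw [hΦid j hj a, hx] at hb
          cases hb
        · simp only [deltaStar]; rw [he]
      | some c =>
        rw [hx] at hp
        simp only [Option.bind_some] at hp
        obtain ⟨q', j, b, hj, hjne, hq⟩ := ih i c hp
        refine ⟨x :: q', j, b, hj, hjne, ?_⟩
        simp only [deltaStar]
        rw [step i a x c hx]
        exact hq
  -- reach: every state can reach level i0
  have reach : ∀ (n : ℕ) (i : T), ({k | le k i} : Set T).ncard ≤ n → ∀ a : C i,
      ∃ (p : List X) (b : C i0), deltaStar δ' ⟨i, a⟩ p = ⟨i0, b⟩ := by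
    intro n
    induction n with
    | zero =>
      intro i hcard a
      exfalso
      have h1 : 0 < ({k | le k i} : Set T).ncard :=
        (Set.ncard_pos (Set.toFinite _)).mpr ⟨i, hrefl i⟩
      omega
    | succ n ih =>
      intro i hcard a
      by_cases hi : i = i0
      · subst hi; exact ⟨[], a, rfl⟩
      · obtain ⟨p, _, hp⟩ := (hother i hi).2.2 a
        obtain ⟨q, j, b, hj, hjne, hq⟩ := escape p i a hp
        have hsub : ({k | le k j} : Set T) ⊂ {k | le k i} := by
          refine (Set.ssubset_iff_of_subset ?_).mpr ⟨i, hrefl i, ?_⟩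
          · intro k hk; exact htrans k j i hk hj
          · intro hij; exact hjne (hanti j i hj hij)
        have hlt := Set.ncard_lt_ncard hsub (Set.toFinite _)
        obtain ⟨p', c, hp'⟩ := ih j (by omega) b
        refine ⟨q ++ p', c, ?_⟩
        rw [dsApp q p' _, hq]
        exact hp'
  -- HomDown: Φ is a homomorphism on defined transitions, for all pairs k ≤ i
  have homDown : ∀ (n : ℕ) (i k : T) (hki : le k i),
      ({m | le k m ∧ le m i} : Set T).ncard ≤ n →
      ∀ (a : C i) (x : X) (b : C i), d i a x = some b →
        d k (Φ i k hki a) x = some (Φ i k hki b) := by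
    intro n
    induction n with
    | zero =>
      intro i k hki hcard
      exfalso
      have h1 : 0 < ({m | le k m ∧ le m i} : Set T).ncard :=
        (Set.ncard_pos (Set.toFinite _)).mpr ⟨k, hrefl k, hki⟩
      omega
    | succ n ih =>
      intro i k hki hcard a x b hd
      by_cases hik : k = i
      · subst hik
        rw [hΦid k hki a, hΦid k hki b]
        exact hd
      · by_cases hcov : ∀ m, le k m → le m i → m = k ∨ m = i
        · exact (hcover i k hki (fun e => hik e.symm) hcov).1 a x b hd
        · push_neg at hcov
          obtain ⟨m, hkm, hmi, hmk, hmi'⟩ := hcov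
          have hc1 : ({p | le m p ∧ le p i} : Set T).ncard ≤ n := by
            have hsub : ({p | le m p ∧ le p i} : Set T) ⊂ {p | le k p ∧ le p i} := by
              refine (Set.ssubset_iff_of_subset ?_).mpr ⟨k, ⟨hrefl k, hki⟩, ?_⟩
              · rintro p ⟨h1, h2⟩; exact ⟨htrans k m p hkm h1, h2⟩
              · rintro ⟨hmk', _⟩; exact hmk (hanti m k hmk' hkm)
            have := Set.ncard_lt_ncard hsub (Set.toFinite _); omega
          have hc2 : ({p | le k p ∧ le p m} : Set T).ncard ≤ n := by
            have hsub : ({p | le k p ∧ le p m} : Set T) ⊂ {p | le k p ∧ le p i} := by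
              refine (Set.ssubset_iff_of_subset ?_).mpr ⟨i, ⟨hki, hrefl i⟩, ?_⟩
              · rintro p ⟨h1, h2⟩; exact ⟨h1, htrans p m i h2 hmi⟩
              · rintro ⟨_, h2⟩; exact hmi' (hanti m i hmi h2)
            have := Set.ncard_lt_ncard hsub (Set.toFinite _); omega
          have h1 := ih i m hmi hc1 a x b hd
          have h2 := ih m k hkm hc2 _ x _ h1
          rw [hΦcomp i m k hmi hkm hki a, hΦcomp i m k hmi hkm hki b] at h2
          exact h2
  -- Part 3: level i0 is a subautomaton
  have part3 : IsSubaut δ' {p : Σ i, C i | p.1 = i0} := by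
    constructor
    · obtain ⟨a⟩ := hne
      exact ⟨⟨i0, a⟩, rfl⟩
    · rintro ⟨i, a⟩ hi x
      simp only [Set.mem_setOf_eq] at hi
      subst hi
      have hs := hi0some a x
      rw [Option.isSome_iff_exists] at hs
      obtain ⟨b, hb⟩ := hs
      show (δ' ⟨i, a⟩ x).1 = i
      rw [step i a x b hb]
  -- Part 4: level i0 is contained in every subautomaton (kernel)
  have part4 : ∀ R : Set (Σ i, C i), IsSubaut δ' R → {p : Σ i, C i | p.1 = i0} ⊆ R := by
    intro R hR
    obtain ⟨⟨i, a⟩, haR⟩ := hR.1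
    obtain ⟨p, b, hp⟩ := reach (({k | le k i} : Set T).ncard) i le_rfl a
    have hbR : (⟨i0, b⟩ : Σ i, C i) ∈ R := by
      have h2 := subclosed R hR _ haR p
      rwa [hp] at h2
    rintro ⟨j, c⟩ hj
    simp only [Set.mem_setOf_eq] at hj
    subst hj
    exact full R hR j b hbR c
  -- Part 2: semiconnectedness witness
  have part2 : ∀ R : Set (Σ i, C i), IsSubaut δ' R → ∀ a ∈ R,
      ∃ b ∈ R, ∃ p : List X, p ≠ [] ∧ deltaStar δ' b p = a := by
    rintro R hR ⟨i, c⟩ hc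
    obtain ⟨p, hpne, hp⟩ := conn i c c
    exact ⟨⟨i, c⟩, hc, p, hpne, lift p i c c hp⟩
  -- Part 1: retractability
  have part1 : Retractable δ' := by
    intro B hB
    have hi0S : ∀ a : C i0, (⟨i0, a⟩ : Σ i, C i) ∈ B := fun a => part4 B hB rfl
    have hgex : ∀ i : T, ∃ g, ((∀ a : C g, (⟨g, a⟩ : Σ i, C i) ∈ B) ∧ le g i) ∧
        ∀ k, (∀ a : C k, (⟨k, a⟩ : Σ i, C i) ∈ B) → le k i → le k g := by
      intro i
      obtain ⟨g, hg1, hg2⟩ := hmax {k | (∀ a : C k, (⟨k, a⟩ : Σ i, C i) ∈ B) ∧ le k i}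
        ⟨i0, hi0S, hi0le i⟩ ⟨i, fun k hk => hk.2⟩
      exact ⟨g, hg1, fun k h1 h2 => hg2 k ⟨h1, h2⟩⟩
    choose g hg hmaxg using hgex
    refine ⟨fun z => ⟨g z.1, Φ z.1 (g z.1) (hg z.1).2 z.2⟩, ?_, ?_, ?_⟩
    · intro z
      exact (hg z.1).1 _
    · rintro ⟨i, c⟩ hc
      have hiS : ∀ a : C i, (⟨i, a⟩ : Σ i, C i) ∈ B := fun a => full B hB i c hc a
      have hgi : g i = i := hanti (g i) i (hg i).2 (hmaxg i i hiS (hrefl i))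
      have key : ∀ (j : T) (hji : le j i), i = j →
          (⟨j, Φ i j hji c⟩ : Σ i, C i) = ⟨i, c⟩ := by
        rintro j hji rfl
        rw [hΦid i hji c]
      exact key (g i) (hg i).2 hgi.symm
    · rintro ⟨i, a⟩ x
      obtain ⟨m, hmi, b, heδ, hdm, hmmax⟩ := hδ i a x
      obtain ⟨m', hm'j, b', heδ', hdm', hm'max⟩ := hδ (g i) (Φ i (g i) (hg i).2 a) x
      have hgim : le m' i := htrans m' (g i) i hm'j (hg i).2
      have hΦrw : ∀ (k : T) (hk : le k (g i)) (hk2 : le k i),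
          Φ (g i) k hk (Φ i (g i) (hg i).2 a) = Φ i k hk2 a :=
        fun k hk hk2 => hΦcomp i (g i) k (hg i).2 hk hk2 a
      rw [hΦrw m' hm'j hgim] at hdm'
      -- m' is a full level of B
      have hm'S : ∀ c : C m', (⟨m', c⟩ : Σ i, C i) ∈ B := by
        have hmem : (⟨m', b'⟩ : Σ i, C i) ∈ B := by
          rw [← heδ']
          exact hB.2 _ ((hg i).1 _) x
        exact fun c => full B hB m' b' hmem c
      have hm'm : le m' m := hmmax m' hgim (by rw [hdm']; rfl)
      have hgmi : le (g m) i := htrans (g m) m i (hg m).2 hmi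
      have hgmgi : le (g m) (g i) := hmaxg i (g m) (hg m).1 hgmi
      have hdgm : d (g m) (Φ i (g m) hgmi a) x = some (Φ m (g m) (hg m).2 b) := by
        have h3 := homDown (({p | le (g m) p ∧ le p m} : Set T).ncard) m (g m)
          (hg m).2 le_rfl (Φ i m hmi a) x b hdm
        rw [hΦcomp i m (g m) hmi (hg m).2 hgmi a] at h3
        exact h3
      have hgm_m' : le (g m) m' := by
        apply hm'max (g m) hgmgi
        rw [hΦrw (g m) hgmgi hgmi, hdgm]
        rfl
      have hm'gm : le m' (g m) := hmaxg m m' hm'S hm'm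
      have hmeq : m' = g m := hanti m' (g m) hm'gm hgm_m'
      subst hmeq
      have hb2 : b' = Φ m (g m) (hg m).2 b := by
        have hb3 := hdm'.symm.trans hdgm
        injection hb3
      show (fun z => (⟨g z.1, Φ z.1 (g z.1) (hg z.1).2 z.2⟩ : Σ i, C i)) (δ' ⟨i, a⟩ x)
          = δ' ⟨g i, Φ i (g i) (hg i).2 a⟩ x
      rw [heδ, heδ', hb2]
  exact ⟨part1, part2, part3, part4⟩
end
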